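/- Let R be a finite commutative ring. Then the pointwise stabilizer St_α(R) of R in the group of polynomial permutations of R[α] equals the set of those polynomial permutations F of R[α] that are induced by a polynomial of the form x + h(x) for some h ∈ R[x] that is a null polynomial on R. In particular, every element of St_α(R) is induced by a polynomial with coefficients in R. -/
import Mathlib


open Polynomial

private lemma pow_add_of_sq_zero {A : Type*} [CommRing A] (x y : A) (hy : y * y = 0) :
    ∀ n : ℕ, (x + y) ^ n = x ^ n + (n : A) * x ^ (n - 1) * y := by
  intro n
  induction n with
  | zero => simp
  | succ n ih =>
    rw [pow_succ, ih]
    cases n with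
    | zero => simp
    | succ m =>
      have expand : (x ^ (m + 1) + ((m : A) + 1) * x ^ m * y) * (x + y)
          = x ^ (m + 2) + ((m : A) + 2) * x ^ (m + 1) * y + ((m : A) + 1) * x ^ m * (y * y) := by
        ring
      push_cast
      rw [expand, hy]
      ring_nf

private lemma eval_add_of_sq_zero {A : Type*} [CommRing A] (y : A) (hy : y * y = 0)
    (p : Polynomial A) (x : A) :
    p.eval (x + y) = p.eval x + p.derivative.eval x * y := by
  induction p using Polynomial.induction_on' with
  | add p q hp hq =>
    simp only [eval_add, derivative_add, hp, hq]; ring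
  | monomial n c =>
    simp only [eval_monomial, derivative_monomial, pow_add_of_sq_zero x y hy]
    ring

/-- **Proposition (description of the stabilizer).**
Let `R` be a finite commutative ring.  The pointwise stabilizer `St_α(R)` of
`R` in the group of polynomial permutations of `R[α]` equals the set of
polynomial permutations of `R[α]` induced by a polynomial `x + h(x)` with
`h ∈ R[x]` a null polynomial on `R`.  In particular every element of
`St_α(R)` is induced by a polynomial with coefficients in `R`. -/
theorem stabilizer_eq_perms_induced_by_X_add_null (R : Type*) [CommRing R]
    [Finite R] :
    {G : DualNumber R → DualNumber R |
        (∃ f : Polynomial (DualNumber R), ∀ a, G a = f.eval a) ∧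
          Function.Bijective G ∧
            ∀ r : R, G (algebraMap R (DualNumber R) r) =
              algebraMap R (DualNumber R) r} =
      {G : DualNumber R → DualNumber R |
        (∃ h : R[X], (∀ r : R, eval r h = 0) ∧
            ∀ z : DualNumber R, G z = aeval z ((X : R[X]) + h)) ∧
          Function.Bijective G} := by
  classical
  have halg : ⇑(algebraMap R (DualNumber R)) = TrivSqZeroExt.inl :=
    TrivSqZeroExt.algebraMap_eq_inl R R
  ext G
  simp only [Set.mem_setOf_eq]
  constructor
  · rintro ⟨⟨f, hf⟩, hbij, hfix⟩
    refine ⟨?_, hbij⟩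
    set φ : DualNumber R →+* R := (TrivSqZeroExt.fstHom R R R).toRingHom with hφ
    set g : R[X] := f.map φ with hg
    -- g agrees with the identity on R
    have hfix' : ∀ r : R, f.eval (TrivSqZeroExt.inl r) = TrivSqZeroExt.inl r := by
      intro r
      rw [← hf]
      have := hfix r
      rwa [halg] at this
    have hgval : ∀ r : R, g.eval r = r := by
      intro r
      have h1 : φ (TrivSqZeroExt.inl r) = r := TrivSqZeroExt.fst_inl R r
      calc g.eval r = g.eval (φ (TrivSqZeroExt.inl r)) := by rw [h1]
        _ = φ (f.eval (TrivSqZeroExt.inl r)) := by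
            rw [hg, eval_map, eval₂_hom]
        _ = r := by rw [hfix' r, h1]
    refine ⟨g - X, ?_, ?_⟩
    · intro r; simp [hgval r]
    · intro z
      have hXadd : (X : R[X]) + (g - X) = g := by ring
      rw [hXadd, hf]
      -- write z = inl z.fst + inr z.snd
      have hz : z = TrivSqZeroExt.inl z.fst + TrivSqZeroExt.inr z.snd :=
        (TrivSqZeroExt.inl_fst_add_inr_snd_eq z).symm
      have hsq : (TrivSqZeroExt.inr z.snd : DualNumber R) *
          TrivSqZeroExt.inr z.snd = 0 := TrivSqZeroExt.inr_mul_inr R _ _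
      have key : ∀ p : Polynomial (DualNumber R),
          p.eval z = p.eval (TrivSqZeroExt.inl z.fst)
            + p.derivative.eval (TrivSqZeroExt.inl z.fst) * TrivSqZeroExt.inr z.snd := by
        intro p
        conv_lhs => rw [hz]
        exact eval_add_of_sq_zero _ hsq p _
      have haeval : aeval z g = (g.map (algebraMap R (DualNumber R))).eval z := by
        rw [aeval_def, eval_map]
      rw [haeval, key f, key (g.map (algebraMap R (DualNumber R)))]
      -- compare the two pieces
      have h1 : φ (TrivSqZeroExt.inl z.fst) = z.fst := TrivSqZeroExt.fst_inl R _
      have hfst : ∀ q : Polynomial (DualNumber R),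
          φ (q.eval (TrivSqZeroExt.inl z.fst)) = (q.map φ).eval z.fst := by
        intro q
        rw [eval_map]
        conv_rhs => rw [← h1]
        rw [eval₂_hom]
      have hmapmap : (g.map (algebraMap R (DualNumber R))).map φ = g := by
        rw [map_map]
        have : φ.comp (algebraMap R (DualNumber R)) = RingHom.id R := by
          ext r
          simp [hφ, halg]
        rw [this, map_id]
      have hconst : (g.map (algebraMap R (DualNumber R))).eval (TrivSqZeroExt.inl z.fst)
          = f.eval (TrivSqZeroExt.inl z.fst) := by
        rw [hfix' z.fst]
        have : (g.map (algebraMap R (DualNumber R))).eval (TrivSqZeroExt.inl z.fst)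
            = TrivSqZeroExt.inl (g.eval z.fst) := by
          rw [← halg, eval_map, eval₂_hom]
        rw [this, hgval]
      have hderiv : f.derivative.eval (TrivSqZeroExt.inl z.fst) * TrivSqZeroExt.inr z.snd
          = (g.map (algebraMap R (DualNumber R))).derivative.eval (TrivSqZeroExt.inl z.fst)
              * TrivSqZeroExt.inr z.snd := by
        set u := f.derivative.eval (TrivSqZeroExt.inl z.fst) with hu
        set v := (g.map (algebraMap R (DualNumber R))).derivative.eval
          (TrivSqZeroExt.inl z.fst) with hv
        have hfstu : u.fst = v.fst := by
          have e1 : u.fst = (f.derivative.map φ).eval z.fst := hfst _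
          have e2 : v.fst = ((g.map (algebraMap R (DualNumber R))).derivative.map φ).eval
              z.fst := hfst _
          have e3 : (g.map (algebraMap R (DualNumber R))).derivative.map φ
              = f.derivative.map φ := by
            rw [← derivative_map, ← derivative_map, hmapmap, hg]
          rw [e1, e2, e3]
        ext
        · simp [TrivSqZeroExt.fst_mul]
        · simp [TrivSqZeroExt.snd_mul, TrivSqZeroExt.fst_inr, TrivSqZeroExt.snd_inr, hfstu]
      rw [hconst, hderiv]
  · rintro ⟨⟨h, hnull, hG⟩, hbij⟩
    refine ⟨⟨((X : R[X]) + h).map (algebraMap R (DualNumber R)), ?_⟩, hbij, ?_⟩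
    · intro a
      rw [hG a, aeval_def, eval_map]
    · intro r
      rw [hG]
      rw [map_add, aeval_X]
      have : aeval (algebraMap R (DualNumber R) r) h
          = algebraMap R (DualNumber R) (h.eval r) := by
        rw [aeval_algebraMap_apply_eq_algebraMap_eval]
      rw [this, hnull r, map_zero, add_zero]
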